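/- In the mixed-strategy simulation game arising from the 2x2 trust game TG (payoffs u(T,C)=(20,20), u(T,D)=(-100,100), u(WO,·)=(0,0)) with simulation cost c satisfying 0 < c, there is no Nash equilibrium in which player 1 plays the simulation action msim with positive probability. Consequently every Nash equilibrium of TG_msim gives both players payoff 0. -/

import Mathlib

open Finset

noncomputable section

/-- Player 1's payoff in TG_msim, as a function of the pure strategy
    (0 = Trust, 1 = WalkOut, 2 = msim) and player 2's realized mixed strategy,
    parameterized by its defection probability δ. Simulation best-responds to the
    revealed mixed strategy at cost `c`. -/
def tgU1 (c : ℝ) (i : Fin 3) (δ : ℝ) : ℝ :=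
  if i = 0 then 20 - 120 * δ
  else if i = 1 then 0
  else max (20 - 120 * δ) 0 - c

/-- Player 2's payoff in TG_msim; against simulation, player 1 plays the
    favourable best response (Trust whenever it is a best response, ties broken in
    player 2's favour). -/
def tgU2 (i : Fin 3) (δ : ℝ) : ℝ :=
  if i = 0 then 20 + 80 * δ
  else if i = 1 then 0
  else if 0 ≤ 20 - 120 * δ then 20 + 80 * δ else 0

/-- Player 1's expected payoff when she mixes with `μ1` and player 2 plays the
    meta-strategy mixing over `k` mixed strategies with defection probabilities
    `d j` and weights `ν j`. -/
def tgF1 (c : ℝ) (μ1 : Fin 3 → ℝ) (k : ℕ) (ν : Fin k → ℝ) (d : Fin k → ℝ) : ℝ :=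
  ∑ j, ν j * ∑ i, μ1 i * tgU1 c i (d j)

/-- Player 2's expected payoff in the same situation. -/
def tgF2 (μ1 : Fin 3 → ℝ) (k : ℕ) (ν : Fin k → ℝ) (d : Fin k → ℝ) : ℝ :=
  ∑ j, ν j * ∑ i, μ1 i * tgU2 i (d j)

/-- In the mixed-strategy simulation game of the 2x2 trust game, for any positive
    simulation cost, no Nash equilibrium puts positive probability on the
    simulation action, and every Nash equilibrium gives both players payoff 0. -/
theorem tg_msim_no_simulation_equilibrium
    (c : ℝ) (hc : 0 < c)
    (μ1 : Fin 3 → ℝ) (k : ℕ) (ν : Fin k → ℝ) (d : Fin k → ℝ)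
    (hμ1 : μ1 ∈ stdSimplex ℝ (Fin 3)) (hν : ν ∈ stdSimplex ℝ (Fin k))
    (hd : ∀ j, d j ∈ Set.Icc (0 : ℝ) 1)
    (hNE1 : ∀ τ1 ∈ stdSimplex ℝ (Fin 3), tgF1 c τ1 k ν d ≤ tgF1 c μ1 k ν d)
    (hNE2 : ∀ (k' : ℕ) (ν' : Fin k' → ℝ) (d' : Fin k' → ℝ),
      ν' ∈ stdSimplex ℝ (Fin k') → (∀ j, d' j ∈ Set.Icc (0 : ℝ) 1) →
      tgF2 μ1 k' ν' d' ≤ tgF2 μ1 k ν d) :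
    μ1 2 = 0 ∧ tgF1 c μ1 k ν d = 0 ∧ tgF2 μ1 k ν d = 0 := by

  obtain ⟨hμpos, hμsum⟩ := hμ1
  obtain ⟨hνpos, hνsum⟩ := hν
  rw [Fin.sum_univ_three] at hμsum
  have h0 : (0:ℝ) ≤ μ1 0 := hμpos 0
  have h2 : (0:ℝ) ≤ μ1 2 := hμpos 2
  have hin1 : ∀ δ : ℝ, ∑ i, μ1 i * tgU1 c i δ
      = μ1 0 * (20 - 120 * δ) + μ1 2 * (max (20 - 120 * δ) 0 - c) := by
    intro δ
    rw [Fin.sum_univ_three]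
    norm_num [tgU1, show (2:Fin 3) ≠ 0 by decide, show (2:Fin 3) ≠ 1 by decide, show (1:Fin 3) ≠ 0 by decide, show ¬(2:Fin 3) = 0 from by decide, show ¬(2:Fin 3) = 1 from by decide, show ¬(1:Fin 3) = 0 from by decide]
  have hin2 : ∀ δ : ℝ, ∑ i, μ1 i * tgU2 i δ
      = μ1 0 * (20 + 80 * δ) + μ1 2 * (if 0 ≤ 20 - 120 * δ then 20 + 80 * δ else 0) := by
    intro δ
    rw [Fin.sum_univ_three]
    norm_num [tgU2, show (2:Fin 3) ≠ 0 by decide, show (2:Fin 3) ≠ 1 by decide, show (1:Fin 3) ≠ 0 by decide, show ¬(2:Fin 3) = 0 from by decide, show ¬(2:Fin 3) = 1 from by decide, show ¬(1:Fin 3) = 0 from by decide]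
  -- deviation to pure WalkOut gives player 1 payoff 0
  have hV1 : 0 ≤ tgF1 c μ1 k ν d := by
    have hm : (fun i : Fin 3 => if i = 1 then (1:ℝ) else 0) ∈ stdSimplex ℝ (Fin 3) := by
      constructor
      · intro i; dsimp only; split <;> norm_num
      · rw [Fin.sum_univ_three]; norm_num [show ¬(2:Fin 3) = 1 from by decide, show ¬(0:Fin 3) = 1 from by decide]
    have hle := hNE1 _ hm
    have hz : tgF1 c (fun i : Fin 3 => if i = 1 then (1:ℝ) else 0) k ν d = 0 := by
      unfold tgF1
      apply Finset.sum_eq_zero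
      intro j _
      rw [Fin.sum_univ_three]
      norm_num [tgU1, show (2:Fin 3) ≠ 0 by decide, show (2:Fin 3) ≠ 1 by decide, show (1:Fin 3) ≠ 0 by decide, show ¬(2:Fin 3) = 0 from by decide, show ¬(2:Fin 3) = 1 from by decide, show ¬(1:Fin 3) = 0 from by decide]
    linarith
  -- player 2 can deviate to any pure δ
  have hdev2 : ∀ δ : ℝ, δ ∈ Set.Icc (0:ℝ) 1 →
      ∑ i, μ1 i * tgU2 i δ ≤ tgF2 μ1 k ν d := by
    intro δ hδ
    have hm : (fun _ : Fin 1 => (1:ℝ)) ∈ stdSimplex ℝ (Fin 1) := by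
      constructor
      · intro i; norm_num
      · simp
    have := hNE2 1 (fun _ => 1) (fun _ => δ) hm (fun _ => hδ)
    unfold tgF2 at this
    simpa [tgF2] using this
  have h100 : μ1 0 * 100 ≤ tgF2 μ1 k ν d := by
    have h := hdev2 1 ⟨zero_le_one, le_refl 1⟩
    rw [hin2] at h
    norm_num at h
    linarith
  have h16 : (μ1 0 + μ1 2) * (100/3) ≤ tgF2 μ1 k ν d := by
    have h := hdev2 (1/6) ⟨by norm_num, by norm_num⟩
    rw [hin2] at h
    norm_num at h
    linarith
  set M := max (μ1 0 * 100) ((μ1 0 + μ1 2) * (100/3)) with hMdef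
  have hbnd : ∀ j, ∑ i, μ1 i * tgU2 i (d j) ≤ M := by
    intro j
    rw [hin2]
    obtain ⟨hd0, hd1⟩ := hd j
    split_ifs with h
    · refine le_trans ?_ (le_max_right _ _)
      nlinarith
    · refine le_trans ?_ (le_max_left _ _)
      nlinarith
  have hVM : tgF2 μ1 k ν d = M := by
    have hle : tgF2 μ1 k ν d ≤ M := by
      have : tgF2 μ1 k ν d ≤ ∑ j, ν j * M := by
        unfold tgF2
        exact Finset.sum_le_sum fun j _ =>
          mul_le_mul_of_nonneg_left (hbnd j) (hνpos j)
      rw [← Finset.sum_mul, hνsum, one_mul] at this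
      exact this
    have hge : M ≤ tgF2 μ1 k ν d := max_le h100 h16
    linarith
  have hzero : ∑ j, ν j * (M - ∑ i, μ1 i * tgU2 i (d j)) = 0 := by
    have hexp : ∑ j, ν j * (M - ∑ i, μ1 i * tgU2 i (d j))
        = (∑ j, ν j) * M - ∑ j, ν j * ∑ i, μ1 i * tgU2 i (d j) := by
      rw [Finset.sum_mul, ← Finset.sum_sub_distrib]
      exact Finset.sum_congr rfl fun j _ => by ring
    have hVM' : ∑ j, ν j * ∑ i, μ1 i * tgU2 i (d j) = M := hVM
    rw [hexp, hνsum, one_mul, hVM', sub_self]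
  have hsupp : ∀ j, 0 < ν j → ∑ i, μ1 i * tgU2 i (d j) = M := by
    intro j hj
    have hnn : ∀ j ∈ Finset.univ, 0 ≤ ν j * (M - ∑ i, μ1 i * tgU2 i (d j)) :=
      fun j _ => mul_nonneg (hνpos j) (by linarith [hbnd j])
    have hz := (Finset.sum_eq_zero_iff_of_nonneg hnn).1 hzero j (Finset.mem_univ j)
    rcases mul_eq_zero.1 hz with h | h
    · exact absurd h (ne_of_gt hj)
    · linarith [hbnd j]
  -- Phase 1: μ1 2 = 0
  have hμ2 : μ1 2 = 0 := by
    by_contra hne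
    have hμ2pos : 0 < μ1 2 := lt_of_le_of_ne h2 (Ne.symm hne)
    have ha : ∀ j ∈ Finset.univ, ν j * (∑ i, μ1 i * tgU1 c i (d j)) ≤ ν j * (-(c * μ1 2)) := by
      intro j _
      rcases eq_or_lt_of_le (hνpos j) with hν0 | hν0
      · rw [← hν0]; simp
      apply mul_le_mul_of_nonneg_left _ (le_of_lt hν0)
      have hBj := hsupp j hν0
      rw [hin2] at hBj
      obtain ⟨hd0, hd1⟩ := hd j
      rw [hin1]
      split_ifs at hBj with hcase
      · rw [max_eq_left hcase]
        have hMge : (μ1 0 + μ1 2) * (100/3) ≤ M := le_max_right _ _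
        nlinarith
      · rw [max_eq_right (by linarith : 20 - 120 * d j ≤ 0)]
        have hMge : μ1 0 * 100 ≤ M := le_max_left _ _
        nlinarith
    have hle := Finset.sum_le_sum ha
    rw [← Finset.sum_mul, hνsum, one_mul] at hle
    have hle' : tgF1 c μ1 k ν d ≤ -(c * μ1 2) := hle
    nlinarith [mul_pos hc hμ2pos]
  -- Phase 2: μ1 0 = 0
  have hμ0 : μ1 0 = 0 := by
    by_contra hne
    have hμ0pos : 0 < μ1 0 := lt_of_le_of_ne h0 (Ne.symm hne)
    have ha : ∀ j ∈ Finset.univ, ν j * (∑ i, μ1 i * tgU1 c i (d j)) ≤ ν j * (-(100 * μ1 0)) := by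
      intro j _
      rcases eq_or_lt_of_le (hνpos j) with hν0 | hν0
      · rw [← hν0]; simp
      apply mul_le_mul_of_nonneg_left _ (le_of_lt hν0)
      have hBj := hsupp j hν0
      rw [hin2, hμ2] at hBj
      obtain ⟨hd0, hd1⟩ := hd j
      rw [hin1, hμ2]
      have hMge : μ1 0 * 100 ≤ M := le_max_left _ _
      rw [hμ2] at hMdef
      split_ifs at hBj <;> nlinarith
    have hle := Finset.sum_le_sum ha
    rw [← Finset.sum_mul, hνsum, one_mul] at hle
    have hle' : tgF1 c μ1 k ν d ≤ -(100 * μ1 0) := hle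
    linarith
  refine ⟨hμ2, ?_, ?_⟩
  · unfold tgF1
    apply Finset.sum_eq_zero
    intro j _
    rw [hin1 (d j), hμ0, hμ2]; ring
  · unfold tgF2
    apply Finset.sum_eq_zero
    intro j _
    rw [hin2 (d j), hμ0, hμ2]; ring
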